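/- Let R be a finite set of rows, each row r ∈ R having a feature vector v_r : F → ℝ and a target t_r ∈ T, and let CP(p) for p ∈ DP_l denote the number of rows r ∈ R such that v_r follows p and t_r = t_p. Let σ choose σ(j) ∈ S_j for every internal node j and let τ assign a target τ(l) ∈ T to every leaf l. Define x_p = 1 for p ∈ DP_l exactly when s_p(j) = σ(j) for all j ∈ p_BT(l) and t_p = τ(l) (and x_p = 0 otherwise), and ρ_{j,a} = 1 exactly when a = σ(j). Then (x, ρ) is binary and satisfies constraints (alpha) and (gamma), and ∑_{leaves l} ∑_{p∈DP_l} CP(p) x_p equals the number of rows r ∈ R that are correctly classified by the decision tree (σ, τ), i.e., rows r whose unique leaf l reached under σ satisfies τ(l) = t_r. -/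

import Mathlib

open Finset

attribute [local instance] Classical.propDecidable

/-- The decision paths for a leaf `l` (a Boolean string of length `k`) of the complete
binary tree of depth `k`: a split check, belonging to the candidate set `S j` of the
corresponding node `j = l.take i`, for every depth `i < k`, together with a target in `T`.
The split check assigned by `p` at the node `l.take i` is `p.1 i` and its target is `p.2`. -/
noncomputable def DP {F T : Type} [Fintype T] (k : ℕ) (S : List Bool → Finset (F × ℝ))
    (l : List Bool) : Finset ((Fin k → F × ℝ) × T) :=
  (Fintype.piFinset fun i : Fin k => S (l.take i.1)) ×ˢ (Finset.univ : Finset T)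

/-- The leaves of the complete binary tree of depth `k`: Boolean strings of length `k`. -/
noncomputable def Leaves (k : ℕ) : Finset (List Bool) :=
  (Finset.univ : Finset (Fin k → Bool)).image List.ofFn

/-- A feature vector `v` follows a decision path `p` for leaf `l`: at every depth `i < k`,
`v` takes the left branch on the split check `p.1 i` iff the bit of `l` following the node
`l.take i` is `false` (i.e. that node is a left child on the path to `l`). -/
def Follows {F T : Type} (k : ℕ) (v : F → ℝ) (l : List Bool)
    (p : (Fin k → F × ℝ) × T) : Prop :=
  ∀ i : Fin k, (v (p.1 i).1 ≤ (p.1 i).2 ↔ l.getD i.1 false = false)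

/-- A feature vector `v` reaches the leaf `l` under the per-node assignment `σ` of split
checks: for every proper prefix `l.take i` of `l`, the bit of `l` immediately following it
is `false` iff `v` takes the left branch on `σ (l.take i)`. -/
def ReachesLeaf {F : Type} (k : ℕ) (v : F → ℝ) (σ : List Bool → F × ℝ)
    (l : List Bool) : Prop :=
  l.length = k ∧ ∀ i : Fin k,
    (l.getD i.1 false = false ↔ v (σ (l.take i.1)).1 ≤ (σ (l.take i.1)).2)

/-- `CP(p)`: the number of rows `r ∈ R` that follow the path `p` (for leaf `l`) and whose
target coincides with the target of `p`. -/
noncomputable def CP {F T ι : Type} (k : ℕ) (R : Finset ι) (v : ι → F → ℝ) (t : ι → T)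
    (l : List Bool) (p : (Fin k → F × ℝ) × T) : ℕ :=
  (R.filter (fun r => Follows k (v r) l p ∧ t r = p.2)).card

/-- The solution of the integer master problem obtained from a decision tree `(σ, τ)`
(a split check `σ j ∈ S j` for every internal node and a target `τ l` for every leaf) —
`x_p = 1` exactly when `p`'s split checks agree with `σ` and `p`'s target is `τ l`, and
`ρ_{j,a} = 1` exactly when `a = σ j` — is binary, satisfies constraints (alpha) and
(gamma), and its objective value `∑_l ∑_{p ∈ DP_l} CP(p) x_p` equals the number of rows
correctly classified by the decision tree `(σ, τ)`. -/

lemma reach_unique' {F : Type} {k : ℕ} {v : F → ℝ} {σ : List Bool → F × ℝ}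
    {l l' : List Bool} (h : ReachesLeaf k v σ l) (h' : ReachesLeaf k v σ l') : l = l' := by
  obtain ⟨hl, hr⟩ := h
  obtain ⟨hl', hr'⟩ := h'
  have key : ∀ i, i ≤ k → l.take i = l'.take i := by
    intro i hi
    induction i with
    | zero => simp
    | succ n ih =>
      have hnk : n < k := hi
      have ht := ih (le_of_lt hnk)
      have h1 := hr ⟨n, hnk⟩
      have h2 := hr' ⟨n, hnk⟩
      simp only at h1 h2
      rw [ht] at h1
      have hb : l.getD n false = l'.getD n false := by
        rcases Bool.eq_false_or_eq_true (l.getD n false) with hb | hb <;>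
        rcases Bool.eq_false_or_eq_true (l'.getD n false) with hb' | hb' <;>
          simp_all
      have hn1 : n < l.length := by omega
      have hn2 : n < l'.length := by omega
      rw [List.take_succ, List.take_succ, ht,
        List.getElem?_eq_getElem hn1, List.getElem?_eq_getElem hn2]
      rw [List.getD_eq_getElem l false hn1, List.getD_eq_getElem l' false hn2] at hb
      simp [hb]
  have h := key k le_rfl
  rwa [List.take_of_length_le hl.le, List.take_of_length_le hl'.le] at h

lemma mem_Leaves' {k : ℕ} {l : List Bool} : l ∈ Leaves k ↔ l.length = k := by
  simp only [Leaves, Finset.mem_image, Finset.mem_univ, true_and]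
  constructor
  · rintro ⟨f, rfl⟩; simp
  · intro h
    refine ⟨fun i => l.get (Fin.cast h.symm i), ?_⟩
    apply List.ext_getElem
    · simp [h]
    · intro i h1 h2
      simp [List.getElem_ofFn]

lemma canon_mem {F T : Type} [Fintype T] {k : ℕ} {S : List Bool → Finset (F × ℝ)}
    {σ : List Bool → F × ℝ} (hσ : ∀ j : List Bool, j.length < k → σ j ∈ S j)
    {τ : List Bool → T} {l : List Bool} (hl : l.length = k) :
    ((fun i : Fin k => σ (l.take i.1), τ l) : (Fin k → F × ℝ) × T) ∈ DP k S l := by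
  rw [DP, Finset.mem_product]
  refine ⟨Fintype.mem_piFinset.2 fun i => hσ _ ?_, Finset.mem_univ _⟩
  rw [List.length_take, hl]
  exact lt_of_le_of_lt (min_le_left _ _) (by simpa using i.2)

theorem stmt10 {F T ι : Type} [Fintype F] [Nonempty F] [Fintype T] [Nonempty T]
    (k : ℕ) (hk : 1 ≤ k)
    (S : List Bool → Finset (F × ℝ))
    (hS : ∀ j : List Bool, j.length < k → (S j).Nonempty)
    (R : Finset ι) (v : ι → F → ℝ) (t : ι → T)
    (σ : List Bool → F × ℝ) (hσ : ∀ j : List Bool, j.length < k → σ j ∈ S j)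
    (τ : List Bool → T)
    (x : List Bool → (Fin k → F × ℝ) × T → ℝ)
    (ρ : List Bool → F × ℝ → ℝ)
    (hx : ∀ (l : List Bool) (p : (Fin k → F × ℝ) × T),
      x l p = if (∀ i : Fin k, p.1 i = σ (l.take i.1)) ∧ p.2 = τ l then 1 else 0)
    (hρ : ∀ (j : List Bool) (a : F × ℝ), ρ j a = if a = σ j then 1 else 0) :
    -- (x, ρ) is binary
    ((∀ l : List Bool, l.length = k → ∀ p ∈ DP k S l, x l p = 0 ∨ x l p = 1) ∧
     (∀ j : List Bool, j.length < k → ∀ a ∈ S j, ρ j a = 0 ∨ ρ j a = 1)) ∧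
    -- constraints (alpha)
    (∀ l : List Bool, l.length = k → ∑ p ∈ DP k S l, x l p = 1) ∧
    -- constraints (gamma)
    (∀ l : List Bool, l.length = k → ∀ i : Fin k, ∀ a ∈ S (l.take i.1),
      ∑ p ∈ DP k S l, (if p.1 i = a then x l p else 0) = ρ (l.take i.1) a) ∧
    -- the objective value counts the correctly classified rows
    (∑ l ∈ Leaves k, ∑ p ∈ DP k S l, (CP k R v t l p : ℝ) * x l p =
      ((R.filter (fun r => ∃ l : List Bool,
          ReachesLeaf k (v r) σ l ∧ τ l = t r)).card : ℝ)) := by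
  classical
  set P : List Bool → (Fin k → F × ℝ) × T := fun l => (fun i : Fin k => σ (l.take i.1), τ l)
    with hP
  have hxind : ∀ (l : List Bool) (p : (Fin k → F × ℝ) × T),
      x l p = if p = P l then 1 else 0 := by
    intro l p
    rw [hx]
    congr 1
    simp only [eq_iff_iff]
    constructor
    · rintro ⟨h1, h2⟩
      exact Prod.ext (funext h1) h2
    · rintro rfl
      exact ⟨fun i => rfl, rfl⟩
  refine ⟨⟨?_, ?_⟩, ?_, ?_, ?_⟩
  · intro l _ p _
    rw [hxind]; split <;> simp
  · intro j _ a _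
    rw [hρ]; split <;> simp
  · intro l hl
    calc ∑ p ∈ DP k S l, x l p = ∑ p ∈ DP k S l, if p = P l then (1:ℝ) else 0 := by
          exact Finset.sum_congr rfl fun p _ => hxind l p
      _ = 1 := by rw [Finset.sum_ite_eq' (DP k S l) (P l) (fun _ => (1:ℝ))];
                  simp [(show P l ∈ DP k S l from canon_mem hσ hl)]
  · intro l hl i a ha
    have : ∀ p ∈ DP k S l, (if p.1 i = a then x l p else 0) =
        if p = P l then (if σ (l.take i.1) = a then (1:ℝ) else 0) else 0 := by
      intro p _
      rw [hxind]
      by_cases h : p = P l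
      · subst h; simp [hP]
      · simp [h]
    rw [Finset.sum_congr rfl this,
      Finset.sum_ite_eq' (DP k S l) (P l) (fun _ => if σ (l.take i.1) = a then (1:ℝ) else 0)]
    simp only [(show P l ∈ DP k S l from canon_mem hσ hl), if_true, hρ]
    by_cases h : a = σ (l.take i.1) <;> simp [h, eq_comm]
  · have inner : ∀ l ∈ Leaves k, ∑ p ∈ DP k S l, (CP k R v t l p : ℝ) * x l p =
        (CP k R v t l (P l) : ℝ) := by
      intro l hl
      rw [mem_Leaves'] at hl
      have : ∀ p ∈ DP k S l, (CP k R v t l p : ℝ) * x l p =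
          if p = P l then (CP k R v t l p : ℝ) else 0 := by
        intro p _
        rw [hxind]; split <;> simp
      rw [Finset.sum_congr rfl this,
        Finset.sum_ite_eq' (DP k S l) (P l) (fun p => (CP k R v t l p : ℝ))]
      simp [(show P l ∈ DP k S l from canon_mem hσ hl)]
    rw [Finset.sum_congr rfl inner]
    have hCP : ∀ l ∈ Leaves k, (CP k R v t l (P l) : ℝ) =
        ∑ r ∈ R, if ReachesLeaf k (v r) σ l ∧ τ l = t r then (1:ℝ) else 0 := by
      intro l hl
      rw [mem_Leaves'] at hl
      rw [CP, Finset.card_filter]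
      push_cast
      refine Finset.sum_congr rfl fun r _ => ?_
      congr 1
      simp only [eq_iff_iff]
      constructor
      · rintro ⟨hf, ht⟩
        exact ⟨⟨hl, fun i => (hf i).symm⟩, ht.symm⟩
      · rintro ⟨⟨_, hf⟩, ht⟩
        exact ⟨fun i => (hf i).symm, ht.symm⟩
    rw [Finset.sum_congr rfl hCP, Finset.sum_comm, Finset.card_filter]
    push_cast
    refine Finset.sum_congr rfl fun r _ => ?_
    by_cases h : ∃ l : List Bool, ReachesLeaf k (v r) σ l ∧ τ l = t r
    · obtain ⟨l0, hl0⟩ := h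
      have hmem : l0 ∈ Leaves k := mem_Leaves'.2 hl0.1.1
      rw [Finset.sum_eq_single_of_mem l0 hmem]
      · rw [if_pos hl0, if_pos ⟨l0, hl0⟩]
      · intro b _ hb
        rw [if_neg]
        rintro ⟨hr, -⟩
        exact hb (reach_unique' hr hl0.1)
    · rw [if_neg h]
      refine Finset.sum_eq_zero fun l _ => ?_
      rw [if_neg]
      exact fun hc => h ⟨l, hc⟩
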